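/- Lemma 2 (Privacy amplification by subsampling, mutual-information form): Let X and Y be random variables on a common probability space with values in standard measurable spaces, and let S be a {0,1}-valued random variable with Pr[S = 1] = s ∈ (0,1) that is independent of X. Suppose Y is conditionally independent of X given the event {S = 0}. Then the mutual information of the pair (Y,S) with X satisfies I((Y,S); X) = s · I_{P(·|S=1)}(Y; X), where I_{P(·|S=1)}(Y;X) denotes the mutual information of Y and X computed under the probability measure conditioned on the event {S = 1}. In particular, if I_{P(·|S=1)}(Y;X) ≤ ε₀ then I((Y,S);X) ≤ s·ε₀. -/

import Mathlib

open MeasureTheory ProbabilityTheory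
open scoped ENNReal ProbabilityTheory

noncomputable section
open Classical

/-- The Kullback–Leibler divergence (in nats) of `μ` from `ν`. -/
def klDiv {α : Type*} [MeasurableSpace α] (μ ν : Measure α) : ℝ≥0∞ :=
  if μ ≪ ν ∧ Integrable (llr μ ν) μ then ENNReal.ofReal (∫ x, llr μ ν x ∂μ) else ⊤

/-- The mutual information (in nats) between random variables `Y` and `X` under the
probability measure `P`: the KL divergence of the joint law from the product of
the marginals. -/
def mutualInfo {Ω β γ : Type*} [MeasurableSpace Ω] [MeasurableSpace β] [MeasurableSpace γ]
    (P : Measure Ω) (Y : Ω → β) (X : Ω → γ) : ℝ≥0∞ :=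
  klDiv (P.map (fun ω => (Y ω, X ω))) ((P.map Y).prod (P.map X))

section Aux

variable {M : Type*} [MeasurableSpace M]

lemma aux_isFiniteMeasure_smul (μ : Measure M) [IsFiniteMeasure μ] {c : ℝ≥0∞} (hc : c ≠ ∞) :
    IsFiniteMeasure (c • μ) := by
  constructor
  rw [Measure.smul_apply, smul_eq_mul]
  exact ENNReal.mul_lt_top hc.lt_top (measure_lt_top μ _)

/-- KL divergence is unchanged by adding a common mutually singular part. -/
lemma klDiv_add_same (α β ρ : Measure M) [IsFiniteMeasure α] [IsFiniteMeasure β]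
    [IsFiniteMeasure ρ] {E : Set M} (hE : MeasurableSet E)
    (hα : α Eᶜ = 0) (hβ : β Eᶜ = 0) (hρ : ρ E = 0) :
    klDiv (α + ρ) (β + ρ) = klDiv α β := by
  have hβρ : β ⟂ₘ ρ := ⟨Eᶜ, hE.compl, hβ, by rwa [compl_compl]⟩
  have hαρ : α ⟂ₘ ρ := ⟨Eᶜ, hE.compl, hα, by rwa [compl_compl]⟩
  have hρβ : ρ ⟂ₘ β := hβρ.symm
  have hACiff : (α + ρ ≪ β + ρ) ↔ α ≪ β := by
    constructor
    · intro h t ht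
      have h1 : (β + ρ) (t ∩ E) = 0 := by
        have hb : β (t ∩ E) = 0 := measure_mono_null Set.inter_subset_left ht
        have hr : ρ (t ∩ E) = 0 := measure_mono_null Set.inter_subset_right hρ
        simp [Measure.add_apply, hb, hr]
      have h2 : α (t ∩ E) = 0 := by
        have := h h1
        simp only [Measure.add_apply, add_eq_zero] at this
        exact this.1
      have h3 : α (t \ E) = 0 := measure_mono_null (fun x hx => hx.2) hα
      refine le_antisymm ?_ zero_le
      calc α t ≤ α (t ∩ E) + α (t \ E) := measure_le_inter_add_diff α t E
      _ = 0 := by rw [h2, h3, add_zero]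
    · intro h t ht
      simp only [Measure.add_apply, add_eq_zero] at ht ⊢
      exact ⟨h ht.1, ht.2⟩
  have hββρ : β ≪ β + ρ := Measure.AbsolutelyContinuous.rfl.add_right ρ
  have hρβρ : ρ ≪ β + ρ := by
    rw [add_comm]
    exact Measure.AbsolutelyContinuous.rfl.add_right β
  have h1 : (α + ρ).rnDeriv (β + ρ) =ᵐ[β + ρ] α.rnDeriv (β + ρ) + ρ.rnDeriv (β + ρ) :=
    Measure.rnDeriv_add α ρ (β + ρ)
  have h2 : α.rnDeriv (β + ρ) =ᵐ[β] α.rnDeriv β :=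
    Measure.rnDeriv_add_right_of_mutuallySingular hβρ
  have h3 : ρ.rnDeriv (β + ρ) =ᵐ[β] 0 :=
    Measure.rnDeriv_eq_zero_of_mutuallySingular hρβ hββρ
  have hrdβ : (α + ρ).rnDeriv (β + ρ) =ᵐ[β] α.rnDeriv β := by
    filter_upwards [hββρ.ae_le h1, h2, h3] with x hx1 hx2 hx3
    rw [hx1, Pi.add_apply, hx2, hx3, Pi.zero_apply, add_zero]
  have h4 : α.rnDeriv (β + ρ) =ᵐ[ρ] 0 :=
    Measure.rnDeriv_eq_zero_of_mutuallySingular hαρ hρβρ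
  have h5 : ρ.rnDeriv (β + ρ) =ᵐ[ρ] 1 := by
    have h5' : ρ.rnDeriv (ρ + β) =ᵐ[ρ] ρ.rnDeriv ρ :=
      Measure.rnDeriv_add_right_of_mutuallySingular hρβ
    rw [add_comm] at h5'
    exact h5'.trans (Measure.rnDeriv_self ρ)
  have hrdρ : (α + ρ).rnDeriv (β + ρ) =ᵐ[ρ] 1 := by
    filter_upwards [hρβρ.ae_le h1, h4, h5] with x hx1 hx4 hx5
    rw [hx1, Pi.add_apply, hx4, hx5, Pi.zero_apply, zero_add]
  have hllrρ : llr (α + ρ) (β + ρ) =ᵐ[ρ] 0 := by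
    filter_upwards [hrdρ] with x hx
    simp [llr, hx]
  by_cases hc : α ≪ β ∧ Integrable (llr α β) α
  · have hac := hc.1
    have hllrα : llr (α + ρ) (β + ρ) =ᵐ[α] llr α β := by
      filter_upwards [hac.ae_le hrdβ] with x hx
      simp [llr, hx]
    have hintρ : Integrable (llr (α + ρ) (β + ρ)) ρ :=
      (integrable_congr hllrρ).mpr (integrable_zero _ _ _)
    have hintα : Integrable (llr (α + ρ) (β + ρ)) α :=
      (integrable_congr hllrα).mpr hc.2
    have hint : Integrable (llr (α + ρ) (β + ρ)) (α + ρ) :=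
      integrable_add_measure.mpr ⟨hintα, hintρ⟩
    simp only [klDiv]
    rw [if_pos hc, if_pos ⟨hACiff.mpr hac, hint⟩]
    congr 1
    rw [integral_add_measure hintα hintρ, integral_congr_ae hllrα, integral_congr_ae hllrρ]
    simp
  · simp only [klDiv]
    rw [if_neg hc, if_neg ?_]
    intro h'
    apply hc
    have hac : α ≪ β := hACiff.mp h'.1
    refine ⟨hac, ?_⟩
    have hllrα : llr (α + ρ) (β + ρ) =ᵐ[α] llr α β := by
      filter_upwards [hac.ae_le hrdβ] with x hx
      simp [llr, hx]
    have := h'.2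
    rw [integrable_add_measure] at this
    exact (integrable_congr hllrα).mp this.1

/-- KL divergence of equally scaled measures. -/
lemma klDiv_smul (α β : Measure M) [IsFiniteMeasure α] [IsFiniteMeasure β]
    {c : ℝ≥0∞} (hc0 : c ≠ 0) (hct : c ≠ ∞) :
    klDiv (c • α) (c • β) = c * klDiv α β := by
  haveI := aux_isFiniteMeasure_smul α hct
  haveI := aux_isFiniteMeasure_smul β hct
  have hACiff : (c • α ≪ c • β) ↔ α ≪ β := by
    constructor <;> intro h t ht
    · have h1 : (c • β) t = 0 := by simp [Measure.smul_apply, ht]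
      have h2 := h h1
      simp only [Measure.smul_apply, smul_eq_mul, mul_eq_zero] at h2
      exact h2.resolve_left hc0
    · have hβ : β t = 0 := by
        simp only [Measure.smul_apply, smul_eq_mul, mul_eq_zero] at ht
        exact ht.resolve_left hc0
      simp [Measure.smul_apply, h hβ]
  have hrd : (c • α).rnDeriv (c • β) =ᵐ[β] α.rnDeriv β := by
    have h1 := Measure.rnDeriv_smul_right_of_ne_top (c • α) β hc0 hct
    have h2 := Measure.rnDeriv_smul_left_of_ne_top α β hct
    filter_upwards [h1, h2] with x hx1 hx2
    rw [hx1, Pi.smul_apply, hx2, Pi.smul_apply, smul_eq_mul, smul_eq_mul, ← mul_assoc,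
      ENNReal.inv_mul_cancel hc0 hct, one_mul]
  by_cases hcond : α ≪ β ∧ Integrable (llr α β) α
  · have hac := hcond.1
    have hllr : llr (c • α) (c • β) =ᵐ[α] llr α β := by
      filter_upwards [hac.ae_le hrd] with x hx
      simp [llr, hx]
    have hint : Integrable (llr (c • α) (c • β)) (c • α) := by
      rw [integrable_smul_measure hc0 hct]
      exact (integrable_congr hllr).mpr hcond.2
    simp only [klDiv]
    rw [if_pos hcond, if_pos ⟨hACiff.mpr hac, hint⟩]
    rw [integral_smul_measure, integral_congr_ae hllr, smul_eq_mul,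
      ENNReal.ofReal_mul ENNReal.toReal_nonneg, ENNReal.ofReal_toReal hct]
  · simp only [klDiv]
    rw [if_neg hcond, if_neg ?_, ENNReal.mul_top hc0]
    intro h'
    apply hcond
    have hac : α ≪ β := hACiff.mp h'.1
    refine ⟨hac, ?_⟩
    have hllr : llr (c • α) (c • β) =ᵐ[α] llr α β := by
      filter_upwards [hac.ae_le hrd] with x hx
      simp [llr, hx]
    have := h'.2
    rw [integrable_smul_measure hc0 hct] at this
    exact (integrable_congr hllr).mp this

/-- KL divergence is invariant under pushforward by a measurable embedding. -/
lemma klDiv_map (α β : Measure M) [IsFiniteMeasure α] [IsFiniteMeasure β]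
    {N : Type*} [MeasurableSpace N] {e : M → N} (he : MeasurableEmbedding e) :
    klDiv (α.map e) (β.map e) = klDiv α β := by
  have hACiff : (α.map e ≪ β.map e) ↔ α ≪ β := by
    constructor
    · intro h
      refine Measure.AbsolutelyContinuous.mk fun t ht hβt => ?_
      have h1 : (β.map e) (e '' t) = 0 := by
        rw [he.map_apply, he.injective.preimage_image]
        exact hβt
      have h2 := h h1
      rwa [he.map_apply, he.injective.preimage_image] at h2
    · exact fun h => he.absolutelyContinuous_map h
  have hrd := he.rnDeriv_map α β
  by_cases hcond : α ≪ β ∧ Integrable (llr α β) α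
  · have hac := hcond.1
    have hllr : (fun x => llr (α.map e) (β.map e) (e x)) =ᵐ[α] llr α β := by
      filter_upwards [hac.ae_le hrd] with x hx
      simp [llr, hx]
    have hint_iff : Integrable (llr (α.map e) (β.map e)) (α.map e) ↔
        Integrable (fun x => llr (α.map e) (β.map e) (e x)) α :=
      integrable_map_measure (stronglyMeasurable_llr _ _).aestronglyMeasurable
        he.measurable.aemeasurable
    have hint : Integrable (llr (α.map e) (β.map e)) (α.map e) :=
      hint_iff.mpr ((integrable_congr hllr).mpr hcond.2)
    simp only [klDiv]
    rw [if_pos ⟨hACiff.mpr hac, hint⟩, if_pos hcond]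
    congr 1
    rw [integral_map he.measurable.aemeasurable
      (stronglyMeasurable_llr _ _).aestronglyMeasurable, integral_congr_ae hllr]
  · simp only [klDiv]
    rw [if_neg hcond, if_neg ?_]
    intro h'
    apply hcond
    have hac : α ≪ β := hACiff.mp h'.1
    refine ⟨hac, ?_⟩
    have hllr : (fun x => llr (α.map e) (β.map e) (e x)) =ᵐ[α] llr α β := by
      filter_upwards [hac.ae_le hrd] with x hx
      simp [llr, hx]
    have := h'.2
    rw [integrable_map_measure (stronglyMeasurable_llr _ _).aestronglyMeasurable
      he.measurable.aemeasurable] at this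
    exact (integrable_congr hllr).mp this

lemma aux_smul_prod {A B : Type*} [MeasurableSpace A] [MeasurableSpace B]
    (c : ℝ≥0∞) (hct : c ≠ ∞) (μ : Measure A) (ν : Measure B)
    [IsFiniteMeasure μ] [IsFiniteMeasure ν] :
    (c • μ).prod ν = c • (μ.prod ν) := by
  haveI := aux_isFiniteMeasure_smul μ hct
  refine Measure.prod_eq fun s t hs ht => ?_
  simp [Measure.smul_apply, Measure.prod_prod, mul_assoc]

end Aux

/-- Lemma 2 (Privacy amplification by subsampling, mutual-information form):
if `S` is a `{0,1}`-valued random variable with `Pr[S = 1] = s ∈ (0,1)` independent of `X`,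
and `Y` is conditionally independent of `X` given the event `{S = 0}`, then
`I((Y,S); X) = s · I_{P(·|S=1)}(Y; X)`; in particular, if `I_{P(·|S=1)}(Y;X) ≤ ε₀` then
`I((Y,S);X) ≤ s·ε₀`. -/
theorem privacy_amplification_subsampling {Ω β γ : Type*} [MeasurableSpace Ω]
    [MeasurableSpace β] [StandardBorelSpace β] [MeasurableSpace γ] [StandardBorelSpace γ]
    (P : Measure Ω) [IsProbabilityMeasure P]
    (X : Ω → β) (hX : Measurable X) (Y : Ω → γ) (hY : Measurable Y)
    (S : Ω → ℕ) (hS : Measurable S) (hSval : ∀ ω, S ω = 0 ∨ S ω = 1)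
    (s : ℝ) (hs : s ∈ Set.Ioo (0 : ℝ) 1)
    (hPS1 : P {ω | S ω = 1} = ENNReal.ofReal s)
    (hindep : IndepFun S X P)
    (hcondindep : IndepFun Y X (P[|{ω | S ω = 0}]))
    (ε₀ : ℝ≥0∞) :
    mutualInfo P (fun ω => (Y ω, S ω)) X
        = ENNReal.ofReal s * mutualInfo (P[|{ω | S ω = 1}]) Y X ∧
    (mutualInfo (P[|{ω | S ω = 1}]) Y X ≤ ε₀ →
      mutualInfo P (fun ω => (Y ω, S ω)) X ≤ ENNReal.ofReal s * ε₀) := by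
  -- abbreviations
  have hs'0 : ENNReal.ofReal s ≠ 0 := by
    simp only [ne_eq, ENNReal.ofReal_eq_zero, not_le]
    exact hs.1
  have hs't : ENNReal.ofReal s ≠ ∞ := ENNReal.ofReal_ne_top
  have hs'1 : ENNReal.ofReal s < 1 := ENNReal.ofReal_lt_one.mpr hs.2
  have hA1pre : {ω | S ω = 1} = S ⁻¹' {1} := by ext ω; simp
  have hA0pre : {ω | S ω = 0} = S ⁻¹' {0} := by ext ω; simp
  have hA1m : MeasurableSet {ω | S ω = 1} := by
    rw [hA1pre]; exact hS (measurableSet_singleton 1)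
  have hA0m : MeasurableSet {ω | S ω = 0} := by
    rw [hA0pre]; exact hS (measurableSet_singleton 0)
  have hA0c : {ω | S ω = 0} = {ω | S ω = 1}ᶜ := by
    ext ω
    simp only [Set.mem_setOf_eq, Set.mem_compl_iff]
    rcases hSval ω with h | h <;> simp [h]
  have hPA0 : P {ω | S ω = 0} = 1 - ENNReal.ofReal s := by
    rw [hA0c, measure_compl hA1m (measure_ne_top P _), measure_univ, hPS1]
  have ht'0 : (1 : ℝ≥0∞) - ENNReal.ofReal s ≠ 0 := (tsub_pos_of_lt hs'1).ne'
  have ht't : (1 : ℝ≥0∞) - ENNReal.ofReal s ≠ ∞ :=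
    ne_top_of_le_ne_top ENNReal.one_ne_top tsub_le_self
  haveI hP1 : IsProbabilityMeasure (P[|{ω | S ω = 1}]) :=
    cond_isProbabilityMeasure (by rw [hPS1]; exact hs'0)
  haveI hP0 : IsProbabilityMeasure (P[|{ω | S ω = 0}]) :=
    cond_isProbabilityMeasure (by rw [hPA0]; exact ht'0)
  -- decomposition of P
  have hdec : P = ENNReal.ofReal s • (P[|{ω | S ω = 1}])
      + ((1 : ℝ≥0∞) - ENNReal.ofReal s) • (P[|{ω | S ω = 0}]) := by
    have e1 : ENNReal.ofReal s • (P[|{ω | S ω = 1}]) = P.restrict {ω | S ω = 1} := by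
      rw [ProbabilityTheory.cond, ← hPS1, smul_smul,
        ENNReal.mul_inv_cancel (by rw [hPS1]; exact hs'0) (measure_ne_top P _), one_smul]
    have e0 : ((1 : ℝ≥0∞) - ENNReal.ofReal s) • (P[|{ω | S ω = 0}])
        = P.restrict {ω | S ω = 0} := by
      rw [ProbabilityTheory.cond, ← hPA0, smul_smul,
        ENNReal.mul_inv_cancel (by rw [hPA0]; exact ht'0) (measure_ne_top P _), one_smul]
    rw [e1, e0, hA0c]
    exact (Measure.restrict_add_restrict_compl hA1m).symm
  -- a.e. values of S under the conditional measures
  have hae1 : ∀ᵐ ω ∂(P[|{ω | S ω = 1}]), S ω = 1 := by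
    rw [ae_iff]
    have h1 : {ω | S ω = 1} ∩ {ω | ¬ S ω = 1} = ∅ := by
      ext ω; simp
    rw [cond_apply hA1m, h1, measure_empty, mul_zero]
  have hae0 : ∀ᵐ ω ∂(P[|{ω | S ω = 0}]), S ω = 0 := by
    rw [ae_iff]
    have h1 : {ω | S ω = 0} ∩ {ω | ¬ S ω = 0} = ∅ := by
      ext ω; simp
    rw [cond_apply hA0m, h1, measure_empty, mul_zero]
  -- measurability of the injections
  have hj1 : Measurable (fun y : γ => (y, (1 : ℕ))) := measurable_id.prodMk measurable_const
  have hj0 : Measurable (fun y : γ => (y, (0 : ℕ))) := measurable_id.prodMk measurable_const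
  have hi1 : Measurable (fun p : γ × β => ((p.1, (1 : ℕ)), p.2)) :=
    (measurable_fst.prodMk measurable_const).prodMk measurable_snd
  have hi0 : Measurable (fun p : γ × β => ((p.1, (0 : ℕ)), p.2)) :=
    (measurable_fst.prodMk measurable_const).prodMk measurable_snd
  have hi1e : MeasurableEmbedding (fun p : γ × β => ((p.1, (1 : ℕ)), p.2)) :=
    MeasurableEmbedding.prodMap (measurableEmbedding_prod_mk_right (1 : ℕ))
      MeasurableEmbedding.id
  -- pushforwards under the conditional measures
  have hmapG1 : (P[|{ω | S ω = 1}]).map (fun ω => ((Y ω, S ω), X ω))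
      = ((P[|{ω | S ω = 1}]).map (fun ω => (Y ω, X ω))).map
          (fun p : γ × β => ((p.1, (1 : ℕ)), p.2)) := by
    rw [Measure.map_map hi1 (hY.prodMk hX)]
    apply Measure.map_congr
    filter_upwards [hae1] with ω h
    simp [Function.comp, h]
  have hmapG0 : (P[|{ω | S ω = 0}]).map (fun ω => ((Y ω, S ω), X ω))
      = ((P[|{ω | S ω = 0}]).map (fun ω => (Y ω, X ω))).map
          (fun p : γ × β => ((p.1, (0 : ℕ)), p.2)) := by
    rw [Measure.map_map hi0 (hY.prodMk hX)]
    apply Measure.map_congr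
    filter_upwards [hae0] with ω h
    simp [Function.comp, h]
  have hmapYS1 : (P[|{ω | S ω = 1}]).map (fun ω => (Y ω, S ω))
      = ((P[|{ω | S ω = 1}]).map Y).map (fun y : γ => (y, (1 : ℕ))) := by
    rw [Measure.map_map hj1 hY]
    apply Measure.map_congr
    filter_upwards [hae1] with ω h
    simp [Function.comp, h]
  have hmapYS0 : (P[|{ω | S ω = 0}]).map (fun ω => (Y ω, S ω))
      = ((P[|{ω | S ω = 0}]).map Y).map (fun y : γ => (y, (0 : ℕ))) := by
    rw [Measure.map_map hj0 hY]
    apply Measure.map_congr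
    filter_upwards [hae0] with ω h
    simp [Function.comp, h]
  -- X has the same conditional law by independence
  have hXmarg : ∀ k : ℕ, P (S ⁻¹' {k}) ≠ 0 → (P[|S ⁻¹' {k}]).map X = P.map X := by
    intro k hk
    have hAm : MeasurableSet (S ⁻¹' {k}) := hS (measurableSet_singleton k)
    ext B hB
    rw [Measure.map_apply hX hB, Measure.map_apply hX hB, cond_apply hAm]
    have hI := hindep.measure_inter_preimage_eq_mul ({k} : Set ℕ) B
      (measurableSet_singleton k) hB
    rw [hI, ← mul_assoc, ENNReal.inv_mul_cancel hk (measure_ne_top P _), one_mul]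
  have hX1 : (P[|{ω | S ω = 1}]).map X = P.map X := by
    rw [hA1pre]
    exact hXmarg 1 (by rw [← hA1pre, hPS1]; exact hs'0)
  have hX0 : (P[|{ω | S ω = 0}]).map X = P.map X := by
    rw [hA0pre]
    exact hXmarg 0 (by rw [← hA0pre, hPA0]; exact ht'0)
  -- conditional independence gives product structure on {S = 0}
  have hprod0 : (P[|{ω | S ω = 0}]).map (fun ω => (Y ω, X ω))
      = ((P[|{ω | S ω = 0}]).map Y).prod ((P[|{ω | S ω = 0}]).map X) :=
    (indepFun_iff_map_prod_eq_prod_map_map hY.aemeasurable hX.aemeasurable).mp hcondindep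
  -- probability instances for pushforwards
  haveI : IsProbabilityMeasure (P.map X) := Measure.isProbabilityMeasure_map hX.aemeasurable
  haveI : IsProbabilityMeasure ((P[|{ω | S ω = 1}]).map (fun ω => (Y ω, X ω))) :=
    Measure.isProbabilityMeasure_map (hY.prodMk hX).aemeasurable
  haveI : IsProbabilityMeasure ((P[|{ω | S ω = 1}]).map Y) :=
    Measure.isProbabilityMeasure_map hY.aemeasurable
  haveI : IsProbabilityMeasure ((P[|{ω | S ω = 1}]).map X) :=
    Measure.isProbabilityMeasure_map hX.aemeasurable
  haveI : IsProbabilityMeasure ((P[|{ω | S ω = 0}]).map Y) :=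
    Measure.isProbabilityMeasure_map hY.aemeasurable
  -- joint law decomposition
  have hμ : P.map (fun ω => ((Y ω, S ω), X ω))
      = ENNReal.ofReal s • (((P[|{ω | S ω = 1}]).map (fun ω => (Y ω, X ω))).map
          (fun p : γ × β => ((p.1, (1 : ℕ)), p.2)))
        + ((1 : ℝ≥0∞) - ENNReal.ofReal s) • ((((P[|{ω | S ω = 0}]).map Y).prod (P.map X)).map
          (fun p : γ × β => ((p.1, (0 : ℕ)), p.2))) := by
    conv_lhs => rw [hdec]
    rw [Measure.map_add _ _ ((hY.prodMk hS).prodMk hX), Measure.map_smul, Measure.map_smul,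
      hmapG1, hmapG0, hprod0, hX0]
  -- marginal decomposition
  have hYSdec : P.map (fun ω => (Y ω, S ω))
      = ENNReal.ofReal s • (((P[|{ω | S ω = 1}]).map Y).map (fun y : γ => (y, (1 : ℕ))))
        + ((1 : ℝ≥0∞) - ENNReal.ofReal s) • (((P[|{ω | S ω = 0}]).map Y).map
          (fun y : γ => (y, (0 : ℕ)))) := by
    conv_lhs => rw [hdec]
    rw [Measure.map_add _ _ (hY.prodMk hS), Measure.map_smul, Measure.map_smul,
      hmapYS1, hmapYS0]
  have hProdMap1 : Prod.map (fun y : γ => (y, (1 : ℕ))) (id : β → β)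
      = (fun p : γ × β => ((p.1, (1 : ℕ)), p.2)) := by
    funext p; rfl
  have hProdMap0 : Prod.map (fun y : γ => (y, (0 : ℕ))) (id : β → β)
      = (fun p : γ × β => ((p.1, (0 : ℕ)), p.2)) := by
    funext p; rfl
  have hpm : ∀ (μY : Measure γ), IsProbabilityMeasure μY → ∀ k : ℕ,
      (μY.map (fun y : γ => (y, k))).prod (P.map X)
        = (μY.prod (P.map X)).map (fun p : γ × β => ((p.1, k), p.2)) := by
    intro μY hμY k
    haveI := hμY
    have h1 : P.map X = (P.map X).map (id : β → β) := (Measure.map_id).symm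
    have hjk : Measurable (fun y : γ => (y, k)) := measurable_id.prodMk measurable_const
    have hPM : Prod.map (fun y : γ => (y, k)) (id : β → β)
        = (fun p : γ × β => ((p.1, k), p.2)) := by funext p; rfl
    calc (μY.map (fun y : γ => (y, k))).prod (P.map X)
        = (μY.map (fun y : γ => (y, k))).prod ((P.map X).map (id : β → β)) := by
          rw [Measure.map_id]
      _ = (μY.prod (P.map X)).map (Prod.map (fun y : γ => (y, k)) (id : β → β)) :=
          Measure.map_prod_map _ _ hjk measurable_id
      _ = (μY.prod (P.map X)).map (fun p : γ × β => ((p.1, k), p.2)) := by rw [hPM]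
  have hν : (P.map (fun ω => (Y ω, S ω))).prod (P.map X)
      = ENNReal.ofReal s • ((((P[|{ω | S ω = 1}]).map Y).prod
            ((P[|{ω | S ω = 1}]).map X)).map (fun p : γ × β => ((p.1, (1 : ℕ)), p.2)))
        + ((1 : ℝ≥0∞) - ENNReal.ofReal s) • ((((P[|{ω | S ω = 0}]).map Y).prod (P.map X)).map
          (fun p : γ × β => ((p.1, (0 : ℕ)), p.2))) := by
    rw [hYSdec, Measure.add_prod, aux_smul_prod _ hs't, aux_smul_prod _ ht't,
      hpm _ inferInstance 1, hpm _ inferInstance 0, hX1]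
  -- support facts
  have hE : MeasurableSet {p : (γ × ℕ) × β | p.1.2 = 1} :=
    (measurable_fst.snd) (measurableSet_singleton 1)
  have hsup1 : ∀ (μ : Measure (γ × β)),
      (μ.map (fun p : γ × β => ((p.1, (1 : ℕ)), p.2))) {p : (γ × ℕ) × β | p.1.2 = 1}ᶜ = 0 := by
    intro μ
    rw [Measure.map_apply hi1 hE.compl]
    convert measure_empty (μ := μ)
    ext p; simp
  have hsup0 : ∀ (μ : Measure (γ × β)),
      (μ.map (fun p : γ × β => ((p.1, (0 : ℕ)), p.2))) {p : (γ × ℕ) × β | p.1.2 = 1} = 0 := by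
    intro μ
    rw [Measure.map_apply hi0 hE]
    convert measure_empty (μ := μ)
    ext p; simp
  haveI hfin1 : IsFiniteMeasure (ENNReal.ofReal s •
      (((P[|{ω | S ω = 1}]).map (fun ω => (Y ω, X ω))).map
        (fun p : γ × β => ((p.1, (1 : ℕ)), p.2)))) := aux_isFiniteMeasure_smul _ hs't
  haveI hfin2 : IsFiniteMeasure (ENNReal.ofReal s •
      ((((P[|{ω | S ω = 1}]).map Y).prod ((P[|{ω | S ω = 1}]).map X)).map
        (fun p : γ × β => ((p.1, (1 : ℕ)), p.2)))) := aux_isFiniteMeasure_smul _ hs't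
  haveI hfin3 : IsFiniteMeasure (((1 : ℝ≥0∞) - ENNReal.ofReal s) •
      ((((P[|{ω | S ω = 0}]).map Y).prod (P.map X)).map
        (fun p : γ × β => ((p.1, (0 : ℕ)), p.2)))) := aux_isFiniteMeasure_smul _ ht't
  -- the key identity
  have hmain : mutualInfo P (fun ω => (Y ω, S ω)) X
      = ENNReal.ofReal s * mutualInfo (P[|{ω | S ω = 1}]) Y X := by
    rw [mutualInfo, mutualInfo, hμ, hν]
    rw [klDiv_add_same _ _ _ hE
      (by rw [Measure.smul_apply, hsup1, smul_zero])
      (by rw [Measure.smul_apply, hsup1, smul_zero])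
      (by rw [Measure.smul_apply, hsup0, smul_zero])]
    rw [klDiv_smul _ _ hs'0 hs't, klDiv_map _ _ hi1e]
  exact ⟨hmain, fun h => by rw [hmain]; exact mul_le_mul_right h _⟩


end
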